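/- Let A be a real p×d matrix with rank(A) = d₁ and B a real q×d matrix with rank(B) = d₂, and suppose every column of A and every column of B is nonzero. Let g₁,…,g_K ∈ ℝ^d, set G_k = diag(g_k) and G = Σ_{k=1}^K g_k g_kᵀ, and assume every diagonal entry of G is nonzero. Define M₁ = A (Σ_{k=1}^K G_k Bᵀ B G_k) Aᵀ and M₂ = B (Σ_{k=1}^K G_k Aᵀ A G_k) Bᵀ. Then: (i) if max{R(G) + d₂, R(BᵀB) + rank(G)} > d, then rank(M₁) = d₁; (ii) if max{R(G) + d₁, R(AᵀA) + rank(G)} > d, then rank(M₂) = d₂. -/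

import Mathlib

open Matrix Module

/-- `maxIndepCols H` is the largest `k ≤ n` such that every set of `k` columns of `H`
is linearly independent (the quantity `R(H)` of the paper). -/
noncomputable def maxIndepCols {m n : ℕ} (H : Matrix (Fin m) (Fin n) ℝ) : ℕ :=
  sSup {k | k ≤ n ∧ ∀ s : Finset (Fin n), s.card = k →
    LinearIndependent ℝ (fun j : {x // x ∈ s} => Hᵀ j.1)}

lemma maxIndepCols_indep {m n : ℕ} (H : Matrix (Fin m) (Fin n) ℝ) {k : ℕ}
    (hk : k ≤ maxIndepCols H) (s : Finset (Fin n)) (hs : s.card = k) :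
    LinearIndependent ℝ (fun j : {x // x ∈ s} => Hᵀ j.1) := by
  set 𝒮 : Set ℕ := {k | k ≤ n ∧ ∀ s : Finset (Fin n), s.card = k →
    LinearIndependent ℝ (fun j : {x // x ∈ s} => Hᵀ j.1)} with h𝒮
  have h0 : (0 : ℕ) ∈ 𝒮 := by
    refine ⟨Nat.zero_le n, fun s hs => ?_⟩
    have : s = ∅ := Finset.card_eq_zero.mp hs
    subst this
    exact linearIndependent_empty_type
  have hbdd : BddAbove 𝒮 := ⟨n, fun k hk => hk.1⟩
  have hmem : maxIndepCols H ∈ 𝒮 := Nat.sSup_mem ⟨0, h0⟩ hbdd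
  have hcard : s.card ≤ maxIndepCols H := hs ▸ hk
  obtain ⟨s', hsub, hcard'⟩ := Finset.exists_superset_card_eq hcard
    (by simpa using hmem.1)
  have hind := hmem.2 s' hcard'
  exact hind.comp (fun j : {x // x ∈ s} => (⟨j.1, hsub j.2⟩ : {x // x ∈ s'}))
    (fun a b hab => Subtype.ext (by simpa using congrArg Subtype.val hab))

lemma supp_large {n : ℕ} (H : Matrix (Fin n) (Fin n) ℝ)
    (u : Fin n → ℝ) (hu : H.mulVec u = 0) (hne : u ≠ 0) :
    maxIndepCols H < (Finset.univ.filter (fun i => u i ≠ 0)).card := by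
  by_contra hle
  push_neg at hle
  set s := Finset.univ.filter (fun i => u i ≠ 0) with hsdef
  have hind := maxIndepCols_indep H hle s rfl
  rw [Fintype.linearIndependent_iff] at hind
  have hz : ∀ j : {x // x ∈ s}, u j.1 = 0 := by
    apply hind (fun j => u j.1)
    funext a
    have key : ∑ j : Fin n, u j * H a j = 0 := by
      have := congrFun hu a
      simpa [Matrix.mulVec, dotProduct, mul_comm] using this
    simp only [Finset.sum_apply, Pi.smul_apply, smul_eq_mul, transpose_apply, Pi.zero_apply]
    rw [Finset.sum_coe_sort s (fun j => u j * H a j)]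
    rw [Finset.sum_subset (Finset.subset_univ s)]
    · exact key
    · intro j _ hj
      have : u j = 0 := by
        by_contra h
        exact hj (Finset.mem_filter.mpr ⟨Finset.mem_univ j, h⟩)
      simp [this]
  apply hne
  funext i
  by_cases h : i ∈ s
  · exact hz ⟨i, h⟩
  · by_contra h'
    exact h (Finset.mem_filter.mpr ⟨Finset.mem_univ i, h'⟩)

lemma exists_small_support {ι : Type*} [Fintype ι] [DecidableEq ι]
    (N : Submodule ℝ (ι → ℝ)) (hN : 1 ≤ finrank ℝ N) :
    ∃ u : ι → ℝ, u ∈ N ∧ u ≠ 0 ∧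
      (Finset.univ.filter (fun i => u i ≠ 0)).card + finrank ℝ N ≤ Fintype.card ι + 1 := by
  set t := finrank ℝ N with ht
  have htn : t ≤ Fintype.card ι := by
    have h1 := Submodule.finrank_le N
    rwa [Module.finrank_fintype_fun_eq_card] at h1
  obtain ⟨T, _, hT2⟩ := Finset.exists_subset_card_eq
    (show t - 1 ≤ (Finset.univ : Finset ι).card by rw [Finset.card_univ]; omega)
  let π : N →ₗ[ℝ] ({x // x ∈ T} → ℝ) :=
    { toFun := fun v j => (v : ι → ℝ) j.1
      map_add' := fun a b => rfl
      map_smul' := fun c a => rfl }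
  have hπ : ¬ Function.Injective π := by
    intro hinj
    have := LinearMap.finrank_le_finrank_of_injective hinj
    rw [Module.finrank_fintype_fun_eq_card, Fintype.card_coe, hT2] at this
    omega
  rw [← LinearMap.ker_eq_bot] at hπ
  obtain ⟨v, hv, hvne⟩ := Submodule.exists_mem_ne_zero_of_ne_bot hπ
  refine ⟨(v : ι → ℝ), v.2, ?_, ?_⟩
  · simpa using hvne
  · have hTz : ∀ i ∈ T, (v : ι → ℝ) i = 0 := by
      intro i hi
      have := congrFun (LinearMap.mem_ker.mp hv) ⟨i, hi⟩
      simpa [π] using this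
    have hsub : Finset.univ.filter (fun i => (v : ι → ℝ) i ≠ 0) ⊆ Finset.univ \ T := by
      intro i hi
      rw [Finset.mem_filter] at hi
      rw [Finset.mem_sdiff]
      refine ⟨Finset.mem_univ i, fun hiT => hi.2 (hTz i hiT)⟩
    have hcard := Finset.card_le_card hsub
    rw [Finset.card_sdiff_of_subset (Finset.subset_univ T), Finset.card_univ, hT2] at hcard
    omega

lemma supp_card_le {d : ℕ} {s : Finset (Fin d)} (u : {i // i ∈ s} → ℝ) (w : Fin d → ℝ)
    (hw : ∀ j : {i // i ∈ s}, w j.1 = u j) (hw0 : ∀ i, i ∉ s → w i = 0) :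
    (Finset.univ.filter (fun i => w i ≠ 0)).card ≤
      (Finset.univ.filter (fun j : {i // i ∈ s} => u j ≠ 0)).card := by
  have hsub : Finset.univ.filter (fun i => w i ≠ 0) ⊆
      (Finset.univ.filter (fun j : {i // i ∈ s} => u j ≠ 0)).image Subtype.val := by
    intro i hi
    rw [Finset.mem_filter] at hi
    have his : i ∈ s := by by_contra h; exact hi.2 (hw0 i h)
    exact Finset.mem_image.mpr ⟨⟨i, his⟩,
      Finset.mem_filter.mpr ⟨Finset.mem_univ _, hw ⟨i, his⟩ ▸ hi.2⟩, rfl⟩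
  exact (Finset.card_le_card hsub).trans Finset.card_image_le

lemma core {q d d₂ K : ℕ} (B : Matrix (Fin q) (Fin d) ℝ)
    (hB : B.rank = d₂) (hBcol : ∀ ℓ, Bᵀ ℓ ≠ 0)
    (g : Fin K → Fin d → ℝ) (G : Matrix (Fin d) (Fin d) ℝ)
    (hG : G = ∑ k, Matrix.vecMulVec (g k) (g k))
    (hGdiag : ∀ i, G i i ≠ 0)
    (hmax : d < max (maxIndepCols G + d₂) (maxIndepCols (Bᵀ * B) + G.rank))
    (x : Fin d → ℝ) (hx : x ≠ 0)
    (hker : ∀ k, B.mulVec (x * g k) = 0) : False := by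
  classical
  set s := Finset.univ.filter (fun i => x i ≠ 0) with hsdef
  have hmem_s : ∀ i, i ∈ s ↔ x i ≠ 0 := by intro i; simp [hsdef]
  have hs_ne : s.Nonempty := by
    obtain ⟨i, hi⟩ := Function.ne_iff.mp hx
    exact ⟨i, (hmem_s i).mpr hi⟩
  set V : Matrix (Fin d) (Fin K) ℝ := Matrix.of (fun i k => x i * g k i) with hVdef
  have hBV : B * V = 0 := by
    ext j k
    have := congrFun (hker k) j
    simpa [Matrix.mul_apply, Matrix.mulVec, dotProduct, hVdef] using this
  have hGapp : ∀ i j, G i j = ∑ k, g k i * g k j := by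
    intro i j; rw [hG]; simp [Matrix.sum_apply, Matrix.vecMulVec_apply]
  set Θ : Matrix (Fin K) {i // i ∈ s} ℝ := Matrix.of (fun k j => g k j.1) with hΘdef
  set t := finrank ℝ (LinearMap.ker Θ.mulVecLin) with htdef
  have hF1 : Θ.rank + t = s.card := by
    have := LinearMap.finrank_range_add_finrank_ker Θ.mulVecLin
    rw [Module.finrank_fintype_fun_eq_card, Fintype.card_coe] at this
    rw [htdef]
    exact this
  have hF2 : Θ.rank ≤ V.rank := by
    set E : Matrix (Fin d) {i // i ∈ s} ℝ :=
      Matrix.of (fun i j => if i = j.1 then (1:ℝ) else 0) with hEdef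
    have hprod : Vᵀ * E = Θ * Matrix.diagonal (fun j : {i // i ∈ s} => x j.1) := by
      ext k j
      rw [Matrix.mul_apply, Matrix.mul_diagonal]
      rw [Finset.sum_eq_single j.1]
      · simp [hEdef, hVdef, hΘdef, mul_comm]
      · intro i _ hij
        simp [hEdef, hij]
      · intro habs; exact absurd (Finset.mem_univ _) habs
    have hdet : IsUnit (Matrix.diagonal (fun j : {i // i ∈ s} => x j.1)).det := by
      rw [Matrix.det_diagonal]
      exact isUnit_iff_ne_zero.mpr
        (Finset.prod_ne_zero_iff.mpr (fun j _ => (hmem_s j.1).mp j.2))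
    calc Θ.rank = (Θ * Matrix.diagonal (fun j : {i // i ∈ s} => x j.1)).rank :=
          (Matrix.rank_mul_eq_left_of_isUnit_det _ Θ hdet).symm
      _ = (Vᵀ * E).rank := by rw [hprod]
      _ ≤ Vᵀ.rank := Matrix.rank_mul_le_left _ _
      _ = V.rank := Matrix.rank_transpose V
  set extL : ({i // i ∈ s} → ℝ) →ₗ[ℝ] (Fin d → ℝ) :=
    { toFun := fun u i => if h : i ∈ s then u ⟨i, h⟩ else 0
      map_add' := by intro a b; funext i; by_cases h : i ∈ s <;> simp [h]
      map_smul' := by intro c a; funext i; by_cases h : i ∈ s <;> simp [h] } with hextdef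
  have hextinj : Function.Injective extL := by
    intro a b hab
    funext j
    have := congrFun hab j.1
    simpa [hextdef, j.2] using this
  have hGext : ∀ u : {i // i ∈ s} → ℝ, Θ.mulVec u = 0 → G.mulVec (extL u) = 0 := by
    intro u hu
    have hinner : ∀ k, ∑ j, g k j * (extL u) j = 0 := by
      intro k
      have h1 : ∑ j ∈ s, g k j * (extL u) j = ∑ j : Fin d, g k j * (extL u) j := by
        apply Finset.sum_subset (Finset.subset_univ s)
        intro j _ hj; simp [hextdef, hj]
      have h2 : ∑ j ∈ s, g k j * (extL u) j = ∑ j : {i // i ∈ s}, g k j.1 * u j := by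
        rw [← Finset.sum_coe_sort s (fun j => g k j * (extL u) j)]
        apply Finset.sum_congr rfl
        intro j _; simp [hextdef, j.2]
      rw [← h1, h2]
      have := congrFun hu k
      simpa [hΘdef, Matrix.mulVec, dotProduct] using this
    funext i
    have hcalc : (G.mulVec (extL u)) i = ∑ k, g k i * ∑ j, g k j * (extL u) j := by
      unfold Matrix.mulVec dotProduct
      simp only [hGapp, Finset.sum_mul]
      rw [Finset.sum_comm]
      simp [Finset.mul_sum, mul_assoc]
    show (G.mulVec (extL u)) i = 0
    rw [hcalc]
    simp [hinner]
  have hF3 : t + G.rank ≤ d := by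
    have hmap : Submodule.map extL (LinearMap.ker Θ.mulVecLin) ≤ LinearMap.ker G.mulVecLin := by
      rintro w ⟨u, hu, rfl⟩
      exact LinearMap.mem_ker.mpr (hGext u (LinearMap.mem_ker.mp hu))
    have h1 : finrank ℝ (Submodule.map extL (LinearMap.ker Θ.mulVecLin)) = t := by
      rw [htdef]
      exact (LinearEquiv.finrank_eq
        (Submodule.equivMapOfInjective extL hextinj (LinearMap.ker Θ.mulVecLin))).symm
    have h2 := LinearMap.finrank_range_add_finrank_ker G.mulVecLin
    rw [Module.finrank_fintype_fun_eq_card, Fintype.card_fin] at h2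
    have hr : G.rank = finrank ℝ (LinearMap.range G.mulVecLin) := rfl
    have h3 : finrank ℝ (Submodule.map extL (LinearMap.ker Θ.mulVecLin)) ≤
        finrank ℝ (LinearMap.ker G.mulVecLin) := Submodule.finrank_mono hmap
    omega
  have hkerB : LinearMap.range V.mulVecLin ≤ LinearMap.ker B.mulVecLin := by
    rintro w ⟨c, rfl⟩
    rw [LinearMap.mem_ker]
    show B.mulVec (V.mulVec c) = 0
    rw [Matrix.mulVec_mulVec, hBV, Matrix.zero_mulVec]
  have hVd : V.rank + d₂ ≤ d := by
    have h1 : finrank ℝ (LinearMap.range V.mulVecLin) ≤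
        finrank ℝ (LinearMap.ker B.mulVecLin) := Submodule.finrank_mono hkerB
    have h2 := LinearMap.finrank_range_add_finrank_ker B.mulVecLin
    rw [Module.finrank_fintype_fun_eq_card, Fintype.card_fin] at h2
    have hr : B.rank = finrank ℝ (LinearMap.range B.mulVecLin) := rfl
    have hrV : V.rank = finrank ℝ (LinearMap.range V.mulVecLin) := rfl
    omega
  have hextz : ∀ (u : {i // i ∈ s} → ℝ) i, i ∉ s → extL u i = 0 := by
    intro u i hi; simp [hextdef, hi]
  have hextv : ∀ (u : {i // i ∈ s} → ℝ) (j : {i // i ∈ s}), extL u j.1 = u j := by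
    intro u j; simp [hextdef, j.2]
  rcases lt_max_iff.mp hmax with h1 | h2
  · by_cases hcard : s.card ≤ maxIndepCols G
    · have ht0 : LinearMap.ker Θ.mulVecLin = ⊥ := by
        by_contra hbot
        obtain ⟨u, hu, hune⟩ := Submodule.exists_mem_ne_zero_of_ne_bot hbot
        have hGu := hGext u (LinearMap.mem_ker.mp hu)
        have hextne : extL u ≠ 0 := fun h => hune (hextinj (h.trans (map_zero extL).symm))
        have hlarge := supp_large G (extL u) hGu hextne
        have hle := supp_card_le u (extL u) (hextv u) (hextz u)
        have hcu : (Finset.univ.filter (fun j : {i // i ∈ s} => u j ≠ 0)).card ≤ s.card := by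
          calc _ ≤ (Finset.univ : Finset {i // i ∈ s}).card :=
                Finset.card_le_card (Finset.subset_univ _)
            _ = s.card := by rw [Finset.card_univ, Fintype.card_coe]
        omega
      have htz : t = 0 := by rw [htdef, ht0, finrank_bot]
      have hV : s.card ≤ V.rank := by omega
      have hWVS : LinearMap.range V.mulVecLin ≤ LinearMap.range extL := by
        rintro w ⟨c, rfl⟩
        refine ⟨fun j => (V.mulVec c : Fin d → ℝ) j.1, ?_⟩
        funext i
        by_cases h : i ∈ s
        · exact hextv (fun j => (V.mulVec c : Fin d → ℝ) j.1) ⟨i, h⟩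
        · have hxi : x i = 0 := by by_contra hxi; exact h ((hmem_s i).mpr hxi)
          rw [hextz _ i h]
          show (0:ℝ) = V.mulVec c i
          simp [Matrix.mulVec, dotProduct, hVdef, hxi]
      have hVSrank : finrank ℝ (LinearMap.range extL) = s.card := by
        rw [LinearMap.finrank_range_of_inj hextinj, Module.finrank_fintype_fun_eq_card,
          Fintype.card_coe]
      have heq : LinearMap.range V.mulVecLin = LinearMap.range extL :=
        Submodule.eq_of_le_of_finrank_le hWVS (by rw [hVSrank]; exact hV)
      obtain ⟨i0, hi0⟩ := hs_ne
      have he : Pi.single i0 (1:ℝ) ∈ LinearMap.range V.mulVecLin := by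
        rw [heq]
        refine ⟨fun j => (Pi.single i0 (1:ℝ) : Fin d → ℝ) j.1, ?_⟩
        funext i
        by_cases h : i ∈ s
        · exact hextv (fun j => (Pi.single i0 (1:ℝ) : Fin d → ℝ) j.1) ⟨i, h⟩
        · have hz : (Pi.single i0 (1:ℝ) : Fin d → ℝ) i = 0 := by
            apply Pi.single_eq_of_ne
            rintro rfl; exact h hi0
          rw [hextz _ i h, hz]
      have hBe := hkerB he
      rw [LinearMap.mem_ker] at hBe
      apply hBcol i0
      funext j
      have := congrFun hBe j
      simpa [Matrix.mulVecLin_apply, Matrix.mulVec_single, Matrix.transpose_apply] using this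
    · push_neg at hcard
      have hMle : maxIndepCols G ≤ V.rank := by
        by_cases ht : t = 0
        · omega
        · have hN : 1 ≤ t := Nat.one_le_iff_ne_zero.mpr ht
          obtain ⟨u, hu, hune, hsupp⟩ :=
            exists_small_support (LinearMap.ker Θ.mulVecLin) (by rw [← htdef]; exact hN)
          have hGu := hGext u (LinearMap.mem_ker.mp hu)
          have hextne : extL u ≠ 0 := fun h => hune (hextinj (h.trans (map_zero extL).symm))
          have hlarge := supp_large G (extL u) hGu hextne
          have hle := supp_card_le u (extL u) (hextv u) (hextz u)
          rw [← htdef, Fintype.card_coe] at hsupp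
          omega
      omega
  · set Vres : Matrix {i // i ∈ s} (Fin K) ℝ := Matrix.of (fun j k => V j.1 k) with hVresdef
    have hVle : V.rank ≤ Vres.rank := by
      set E2 : Matrix (Fin d) {i // i ∈ s} ℝ :=
        Matrix.of (fun i j => if i = j.1 then (1:ℝ) else 0) with hE2def
      have hEV : E2 * Vres = V := by
        ext i k
        rw [Matrix.mul_apply]
        by_cases h : i ∈ s
        · rw [Finset.sum_eq_single (⟨i, h⟩ : {i // i ∈ s})]
          · simp [hE2def, hVresdef]
          · intro j _ hj
            have hij : i ≠ j.1 := fun he => hj (Subtype.ext he.symm)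
            simp [hE2def, hij]
          · intro habs; exact absurd (Finset.mem_univ _) habs
        · have hxi : x i = 0 := by by_contra hxi; exact h ((hmem_s i).mpr hxi)
          have hz : ∀ j : {i // i ∈ s}, E2 i j = 0 := by
            intro j
            have hij : i ≠ j.1 := by rintro rfl; exact h j.2
            simp [hE2def, hij]
          simp [hz, hVdef, hxi]
      calc V.rank = (E2 * Vres).rank := by rw [hEV]
        _ ≤ Vres.rank := Matrix.rank_mul_le_right _ _
    have hV1 : 1 ≤ V.rank := by
      obtain ⟨i0, hi0⟩ := hs_ne
      have hxi0 : x i0 ≠ 0 := (hmem_s i0).mp hi0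
      have hk0 : ∃ k0, g k0 i0 ≠ 0 := by
        by_contra hc; push_neg at hc
        apply hGdiag i0
        rw [hGapp]
        exact Finset.sum_eq_zero (fun k _ => by rw [hc k]; ring)
      obtain ⟨k0, hk0⟩ := hk0
      by_contra hr
      push_neg at hr
      have h0 : V.rank = 0 := by omega
      have hbot : LinearMap.range V.mulVecLin = ⊥ := Submodule.finrank_eq_zero.mp h0
      have hcol : V.mulVec (Pi.single k0 1) = 0 := by
        have : V.mulVecLin (Pi.single k0 1) ∈ LinearMap.range V.mulVecLin :=
          LinearMap.mem_range_self _ _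
        rw [hbot] at this
        simpa using this
      have := congrFun hcol i0
      rw [Matrix.mulVec_single] at this
      simp only [MulOpposite.op_one, one_smul, Matrix.col_apply, Pi.zero_apply] at this
      exact (mul_ne_zero hxi0 hk0) this
    obtain ⟨u, hu, hune, hsupp⟩ :=
      exists_small_support (LinearMap.range Vres.mulVecLin)
        (show 1 ≤ Vres.rank from hV1.trans hVle)
    obtain ⟨c, hc⟩ := hu
    set w := V.mulVec c with hwdef
    have hwj : ∀ j : {i // i ∈ s}, w j.1 = u j := by
      intro j
      rw [← hc]
      rfl
    have hw0 : ∀ i, i ∉ s → w i = 0 := by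
      intro i hi
      have hxi : x i = 0 := by by_contra hxi; exact hi ((hmem_s i).mpr hxi)
      simp [hwdef, Matrix.mulVec, dotProduct, hVdef, hxi]
    have hwne : w ≠ 0 := by
      obtain ⟨j, hj⟩ := Function.ne_iff.mp hune
      intro h0
      apply hj
      rw [← hwj j, h0]
      rfl
    have hwker : (Bᵀ * B).mulVec w = 0 := by
      have hBw : B.mulVec w = 0 := by
        rw [hwdef, Matrix.mulVec_mulVec, hBV, Matrix.zero_mulVec]
      rw [← Matrix.mulVec_mulVec, hBw, Matrix.mulVec_zero]
    have hlarge := supp_large (Bᵀ * B) w hwker hwne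
    have hle := supp_card_le u w hwj hw0
    rw [Fintype.card_coe] at hsupp
    have hrVres : finrank ℝ (LinearMap.range Vres.mulVecLin) = Vres.rank := rfl
    rw [hrVres] at hsupp
    omega

lemma main₁ {p q d d₁ d₂ K : ℕ} (A : Matrix (Fin p) (Fin d) ℝ) (B : Matrix (Fin q) (Fin d) ℝ)
    (hA : A.rank = d₁) (hB : B.rank = d₂) (hBcol : ∀ ℓ, Bᵀ ℓ ≠ 0)
    (g : Fin K → Fin d → ℝ) (G : Matrix (Fin d) (Fin d) ℝ)
    (hG : G = ∑ k, Matrix.vecMulVec (g k) (g k))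
    (hGdiag : ∀ i, G i i ≠ 0)
    (hmax : d < max (maxIndepCols G + d₂) (maxIndepCols (Bᵀ * B) + G.rank)) :
    (A * (∑ k, Matrix.diagonal (g k) * Bᵀ * B * Matrix.diagonal (g k)) * Aᵀ).rank = d₁ := by
  classical
  set S : Matrix (Fin d) (Fin d) ℝ :=
    ∑ k, Matrix.diagonal (g k) * Bᵀ * B * Matrix.diagonal (g k) with hSdef
  have hquad : ∀ z : Fin d → ℝ,
      z ⬝ᵥ S.mulVec z = ∑ k, (B.mulVec (g k * z)) ⬝ᵥ (B.mulVec (g k * z)) := by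
    intro z
    have hsum : S.mulVec z
        = ∑ k, (Matrix.diagonal (g k) * Bᵀ * B * Matrix.diagonal (g k)).mulVec z := by
      rw [hSdef]
      funext i
      rw [Finset.sum_apply]
      simp only [Matrix.mulVec, dotProduct, Matrix.sum_apply, Finset.sum_mul]
      rw [Finset.sum_comm]
    rw [hsum]
    have hdsum : ∀ (w : Fin K → Fin d → ℝ), z ⬝ᵥ (∑ k, w k) = ∑ k, z ⬝ᵥ w k := by
      intro w
      simp only [dotProduct, Finset.sum_apply, Finset.mul_sum]
      rw [Finset.sum_comm]
    rw [hdsum]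
    apply Finset.sum_congr rfl
    intro k _
    have hassoc : Matrix.diagonal (g k) * Bᵀ * B * Matrix.diagonal (g k)
        = (Matrix.diagonal (g k) * Bᵀ) * (B * Matrix.diagonal (g k)) :=
      Matrix.mul_assoc _ _ _
    have hDz : (Matrix.diagonal (g k)).mulVec z = g k * z := by
      funext i; rw [Matrix.mulVec_diagonal]; rfl
    have hBD : (B * Matrix.diagonal (g k)).mulVec z = B.mulVec (g k * z) := by
      rw [← Matrix.mulVec_mulVec, hDz]
    have hvm : z ᵥ* (Matrix.diagonal (g k) * Bᵀ) = B.mulVec (g k * z) := by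
      rw [← Matrix.vecMul_vecMul, Matrix.vecMul_transpose]
      have hzd : z ᵥ* Matrix.diagonal (g k) = g k * z := by
        funext i; rw [Matrix.vecMul_diagonal]; exact mul_comm _ _
      rw [hzd]
    rw [hassoc, ← Matrix.mulVec_mulVec, Matrix.dotProduct_mulVec, hvm, hBD]
  have hPD : ∀ z : Fin d → ℝ, z ⬝ᵥ S.mulVec z = 0 → z = 0 := by
    intro z hz
    by_contra hzne
    have hterm : ∀ k ∈ Finset.univ, (0:ℝ) ≤ (B.mulVec (g k * z)) ⬝ᵥ (B.mulVec (g k * z)) :=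
      fun k _ => Finset.sum_nonneg (fun i _ => mul_self_nonneg _)
    have hall := (Finset.sum_eq_zero_iff_of_nonneg hterm).mp (by rw [← hquad z, hz])
    refine core B hB hBcol g G hG hGdiag hmax z hzne (fun k => ?_)
    have := hall k (Finset.mem_univ k)
    have hy := dotProduct_self_eq_zero.mp this
    rw [mul_comm z (g k)]
    exact hy
  have hkereq : LinearMap.ker (A * S * Aᵀ).mulVecLin = LinearMap.ker Aᵀ.mulVecLin := by
    apply le_antisymm
    · intro y hy
      rw [LinearMap.mem_ker] at hy ⊢
      have hy' : (A * S * Aᵀ).mulVec y = 0 := hy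
      set z := Aᵀ.mulVec y with hzdef
      have hMy : (A * S * Aᵀ).mulVec y = A.mulVec (S.mulVec z) := by
        rw [Matrix.mulVec_mulVec, Matrix.mulVec_mulVec]
      have hq : z ⬝ᵥ S.mulVec z = 0 := by
        have : y ⬝ᵥ (A * S * Aᵀ).mulVec y = 0 := by rw [hy']; simp
        rw [hMy, Matrix.dotProduct_mulVec] at this
        rwa [show y ᵥ* A = z by rw [hzdef, Matrix.mulVec_transpose]] at this
      exact hPD z hq
    · intro y hy
      rw [LinearMap.mem_ker] at hy ⊢
      have hy' : Aᵀ.mulVec y = 0 := hy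
      show (A * S * Aᵀ).mulVec y = 0
      rw [← Matrix.mulVec_mulVec, hy', Matrix.mulVec_zero]
  have h1 := LinearMap.finrank_range_add_finrank_ker (A * S * Aᵀ).mulVecLin
  have h2 := LinearMap.finrank_range_add_finrank_ker Aᵀ.mulVecLin
  rw [Module.finrank_fintype_fun_eq_card, Fintype.card_fin] at h1 h2
  have hr1 : (A * S * Aᵀ).rank = finrank ℝ (LinearMap.range (A * S * Aᵀ).mulVecLin) := rfl
  have hr2 : Aᵀ.rank = finrank ℝ (LinearMap.range Aᵀ.mulVecLin) := rfl
  rw [hkereq] at h1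
  have hAt : Aᵀ.rank = d₁ := by rw [Matrix.rank_transpose, hA]
  omega

theorem stmt0 (p q d d₁ d₂ K : ℕ)
    (A : Matrix (Fin p) (Fin d) ℝ) (B : Matrix (Fin q) (Fin d) ℝ)
    (hA : A.rank = d₁) (hB : B.rank = d₂)
    (hAcol : ∀ ℓ, Aᵀ ℓ ≠ 0) (hBcol : ∀ ℓ, Bᵀ ℓ ≠ 0)
    (g : Fin K → Fin d → ℝ)
    (G : Matrix (Fin d) (Fin d) ℝ)
    (hG : G = ∑ k, Matrix.vecMulVec (g k) (g k))
    (hGdiag : ∀ i, G i i ≠ 0)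
    (M₁ : Matrix (Fin p) (Fin p) ℝ)
    (hM₁ : M₁ = A * (∑ k, Matrix.diagonal (g k) * Bᵀ * B * Matrix.diagonal (g k)) * Aᵀ)
    (M₂ : Matrix (Fin q) (Fin q) ℝ)
    (hM₂ : M₂ = B * (∑ k, Matrix.diagonal (g k) * Aᵀ * A * Matrix.diagonal (g k)) * Bᵀ) :
    (max (maxIndepCols G + d₂) (maxIndepCols (Bᵀ * B) + G.rank) > d → M₁.rank = d₁) ∧
    (max (maxIndepCols G + d₁) (maxIndepCols (Aᵀ * A) + G.rank) > d → M₂.rank = d₂) := by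
  constructor
  · intro h
    rw [hM₁]
    exact main₁ A B hA hB hBcol g G hG hGdiag h
  · intro h
    rw [hM₂]
    exact main₁ B A hB hA hAcol g G hG hGdiag h
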